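/- Let G be a bipartite graph with a fixed bipartition V(G) = X_G ⊔ Y_G and with m edges. Suppose that for every integer r with 0 ≤ r ≤ m there exists a set U_r ⊆ V(G) with U_r ⊆ X_G or U_r ⊆ Y_G such that exactly r edges of G are incident to a vertex of U_r. Then there exists a positive integer N such that for every n ≥ N there is an integer z < n²/2 with the property that every 2-edge coloring E(K_{n,n}) = R ⊔ B with more than z edges in each color class contains, for every integer r with 0 ≤ r ≤ m, a copy of G having exactly r red edges and m − r blue edges. -/

import Mathlib

/-- The number of red edges in a 2-edge coloring of `K_{n,n}`.  The coloring is encoded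
as `c : Fin n → Fin n → Bool`, where `c v w = true` means that the edge between vertex `v`
of the first part and vertex `w` of the second part is red, and `c v w = false` means it
is blue. -/
def redTotal {n : ℕ} (c : Fin n → Fin n → Bool) : ℕ :=
  (Finset.univ.filter fun p : Fin n × Fin n => c p.1 p.2 = true).card

/-- The number of blue edges in a 2-edge coloring of `K_{n,n}`. -/
def blueTotal {n : ℕ} (c : Fin n → Fin n → Bool) : ℕ :=
  (Finset.univ.filter fun p : Fin n × Fin n => c p.1 p.2 = false).card

/-- `redB c u v = true` iff `u` and `v` lie in different parts of `K_{n,n}` and the edge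
between them is red (under the coloring `c : Fin n → Fin n → Bool`, where `c v w = true`
means the edge between vertex `v` of the first part and `w` of the second part is red). -/
def redB {n : ℕ} (c : Fin n → Fin n → Bool) : Fin n ⊕ Fin n → Fin n ⊕ Fin n → Bool
  | Sum.inl v, Sum.inr w => c v w
  | Sum.inr w, Sum.inl v => c v w
  | _, _ => false

/-- `blueB c u v = true` iff `u` and `v` lie in different parts of `K_{n,n}` and the edge
between them is blue. -/
def blueB {n : ℕ} (c : Fin n → Fin n → Bool) : Fin n ⊕ Fin n → Fin n ⊕ Fin n → Bool
  | Sum.inl v, Sum.inr w => !c v w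
  | Sum.inr w, Sum.inl v => !c v w
  | _, _ => false

/-- `crossB u v = true` iff `u` and `v` lie in different parts of `K_{n,n}`,
i.e. `u v` is an edge of `K_{n,n}`. -/
def crossB {n : ℕ} : Fin n ⊕ Fin n → Fin n ⊕ Fin n → Bool
  | Sum.inl _, Sum.inr _ => true
  | Sum.inr _, Sum.inl _ => true
  | _, _ => false

/-- A bipartite graph `G` with fixed bipartition is encoded by its two parts `α`, `β`
and its edge set `E : Finset (α × β)`.  `IsCopy E f` says that `f` realizes a copy of `G`
in `K_{n,n}` (a subgraph of `K_{n,n}` isomorphic to `G`): `f` is an injective map from the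
vertices of `G` to the vertices of `K_{n,n}` sending every edge of `G` to an edge of
`K_{n,n}`. -/
def IsCopy {n : ℕ} {α β : Type*} (E : Finset (α × β)) (f : α ⊕ β → Fin n ⊕ Fin n) : Prop :=
  Function.Injective f ∧ ∀ p ∈ E, crossB (f (Sum.inl p.1)) (f (Sum.inr p.2)) = true

/-- The number of red edges of the copy of the bipartite graph with edge set `E`
realized by `f` in `K_{n,n}` colored by `c`. -/
def edgeRedCount {n : ℕ} {α β : Type*} (c : Fin n → Fin n → Bool)
    (E : Finset (α × β)) (f : α ⊕ β → Fin n ⊕ Fin n) : ℕ :=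
  (E.filter fun p => redB c (f (Sum.inl p.1)) (f (Sum.inr p.2)) = true).card

/-- The number of blue edges of the copy of the bipartite graph with edge set `E`
realized by `f` in `K_{n,n}` colored by `c`. -/
def edgeBlueCount {n : ℕ} {α β : Type*} (c : Fin n → Fin n → Bool)
    (E : Finset (α × β)) (f : α ⊕ β → Fin n ⊕ Fin n) : ℕ :=
  (E.filter fun p => blueB c (f (Sum.inl p.1)) (f (Sum.inr p.2)) = true).card

open Finset Function

def transp {n : ℕ} (c : Fin n → Fin n → Bool) : Fin n → Fin n → Bool := fun i j => c j i

/-- triples (j, i, i') with edge (i,j) red and (i',j) blue -/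
def Tcol {n : ℕ} (c : Fin n → Fin n → Bool) : Finset (Fin n × Fin n × Fin n) :=
  Finset.univ.filter fun q => c q.2.1 q.1 = true ∧ c q.2.2 q.1 = false

/-- triples (i, j, j') with edge (i,j) red and (i,j') blue -/
def Trow {n : ℕ} (c : Fin n → Fin n → Bool) : Finset (Fin n × Fin n × Fin n) :=
  Finset.univ.filter fun q => c q.1 q.2.1 = true ∧ c q.1 q.2.2 = false

lemma Trow_eq_Tcol_transp {n : ℕ} (c : Fin n → Fin n → Bool) : Trow c = Tcol (transp c) := rfl

lemma redTotal_transp {n : ℕ} (c : Fin n → Fin n → Bool) : redTotal (transp c) = redTotal c := by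
  unfold redTotal transp
  apply Finset.card_bij' (fun p _ => Prod.swap p) (fun p _ => Prod.swap p) <;>
    simp [Finset.mem_filter]

lemma blueTotal_transp {n : ℕ} (c : Fin n → Fin n → Bool) : blueTotal (transp c) = blueTotal c := by
  unfold blueTotal transp
  apply Finset.card_bij' (fun p _ => Prod.swap p) (fun p _ => Prod.swap p) <;>
    simp [Finset.mem_filter]

lemma key_count {n : ℕ} (c : Fin n → Fin n → Bool) :
    redTotal c * blueTotal c ≤ n * ((Trow c).card + (Tcol c).card) := by
  classical
  set Red := Finset.univ.filter fun p : Fin n × Fin n => c p.1 p.2 = true with hRed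
  set Blue := Finset.univ.filter fun p : Fin n × Fin n => c p.1 p.2 = false with hBlue
  have hmemR : ∀ p ∈ Red, c p.1 p.2 = true := fun p hp => (Finset.mem_filter.mp hp).2
  have hmemB : ∀ p ∈ Blue, c p.1 p.2 = false := fun p hp => (Finset.mem_filter.mp hp).2
  set F : (Fin n × Fin n) × (Fin n × Fin n) → (Fin n × Fin n × Fin n) ⊕ (Fin n × Fin n × Fin n) :=
    fun pq => if c pq.1.1 pq.2.2 = false then Sum.inl (pq.1.1, pq.1.2, pq.2.2)
      else Sum.inr (pq.2.2, pq.1.1, pq.2.1) with hF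
  have hmaps : ∀ pq ∈ Red ×ˢ Blue, F pq ∈ (Trow c).disjSum (Tcol c) := by
    rintro ⟨p, q⟩ hpq
    rw [Finset.mem_product] at hpq
    have h1 := hmemR _ hpq.1
    have h2 := hmemB _ hpq.2
    by_cases h : c p.1 q.2 = false
    · rw [hF]; simp only [h, if_true]
      exact Finset.inl_mem_disjSum.mpr (Finset.mem_filter.mpr ⟨Finset.mem_univ _, h1, h⟩)
    · rw [hF]; simp only [h, if_false]
      have h' : c p.1 q.2 = true := by revert h; cases c p.1 q.2 <;> simp
      exact Finset.inr_mem_disjSum.mpr (Finset.mem_filter.mpr ⟨Finset.mem_univ _, h', h2⟩)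
  have hfib : ∀ b ∈ (Trow c).disjSum (Tcol c),
      ((Red ×ˢ Blue).filter fun pq => F pq = b).card ≤ n := by
    intro b _
    have : ((Red ×ˢ Blue).filter fun pq => F pq = b).card ≤ (Finset.univ : Finset (Fin n)).card := by
      apply Finset.card_le_card_of_injOn
        (fun pq => Sum.elim (fun _ => pq.2.1) (fun _ => pq.1.2) b)
      · intro _ _; exact Finset.mem_coe.mpr (Finset.mem_univ _)
      · intro pq hpq pq' hpq' hco
        simp only [Finset.mem_coe, Finset.mem_filter] at hpq hpq'
        obtain ⟨p, q⟩ := pq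
        obtain ⟨p', q'⟩ := pq'
        cases b with
        | inl t =>
          simp only [Sum.elim_inl] at hco
          have e1 : p.1 = t.1 ∧ p.2 = t.2.1 ∧ q.2 = t.2.2 := by
            have := hpq.2
            simp only [hF] at this
            by_cases h : c p.1 q.2 = false
            · simp only [h, if_true] at this
              simpa only [Sum.inl.injEq, Sum.inr.injEq, Prod.ext_iff] using this
            · rw [if_neg h] at this; exact absurd this (by simp)
          have e2 : p'.1 = t.1 ∧ p'.2 = t.2.1 ∧ q'.2 = t.2.2 := by
            have := hpq'.2
            simp only [hF] at this
            by_cases h : c p'.1 q'.2 = false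
            · simp only [h, if_true] at this
              simpa only [Sum.inl.injEq, Sum.inr.injEq, Prod.ext_iff] using this
            · rw [if_neg h] at this; exact absurd this (by simp)
          have : p = p' := Prod.ext (e1.1.trans e2.1.symm) (e1.2.1.trans e2.2.1.symm)
          have hq : q = q' := Prod.ext hco (e1.2.2.trans e2.2.2.symm)
          rw [this, hq]
        | inr t =>
          simp only [Sum.elim_inr] at hco
          have e1 : q.2 = t.1 ∧ p.1 = t.2.1 ∧ q.1 = t.2.2 := by
            have := hpq.2
            simp only [hF] at this
            by_cases h : c p.1 q.2 = false
            · simp only [h, if_true] at this; exact absurd this (by simp)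
            · rw [if_neg h] at this
              simpa only [Sum.inl.injEq, Sum.inr.injEq, Prod.ext_iff] using this
          have e2 : q'.2 = t.1 ∧ p'.1 = t.2.1 ∧ q'.1 = t.2.2 := by
            have := hpq'.2
            simp only [hF] at this
            by_cases h : c p'.1 q'.2 = false
            · simp only [h, if_true] at this; exact absurd this (by simp)
            · rw [if_neg h] at this
              simpa only [Sum.inl.injEq, Sum.inr.injEq, Prod.ext_iff] using this
          have hp : p = p' := Prod.ext (e1.2.1.trans e2.2.1.symm) hco
          have hq : q = q' := Prod.ext (e1.2.2.trans e2.2.2.symm) (e1.1.trans e2.1.symm)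
          rw [hp, hq]
    simpa using this
  calc redTotal c * blueTotal c = (Red ×ˢ Blue).card := by
        rw [Finset.card_product]; rfl
    _ ≤ n * ((Trow c).disjSum (Tcol c)).card :=
        Finset.card_le_mul_card_image_of_maps_to hmaps n hfib
    _ = n * ((Trow c).card + (Tcol c).card) := by rw [Finset.card_disjSum]

/-- number of columns separating the ordered row pair `q` -/
def aa {n : ℕ} (c : Fin n → Fin n → Bool) (q : Fin n × Fin n) : ℕ :=
  (Finset.univ.filter fun j => c q.1 j = true ∧ c q.2 j = false).card

lemma Tcol_card {n : ℕ} (c : Fin n → Fin n → Bool) :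
    (Tcol c).card = ∑ q ∈ (Finset.univ : Finset (Fin n × Fin n)), aa c q := by
  classical
  rw [Tcol, Finset.card_filter]
  rw [← Finset.univ_product_univ, Finset.sum_product]
  rw [Finset.sum_comm]
  congr 1
  ext q
  rw [aa, Finset.card_filter]


lemma countinj (k : ℕ) {n : ℕ} (S : Finset (Fin n)) :
    ((Finset.univ : Finset (Fin k → Fin n)).filter
        fun g => Function.Injective g ∧ ∀ t, g t ∈ S).card
      = S.card.descFactorial k := by
  classical
  have h2 : Fintype.card (Fin k ↪ ↥S) = S.card.descFactorial k := by
    rw [Fintype.card_embedding_eq]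
    simp [Fintype.card_coe]
  let e : {g : Fin k → Fin n // Function.Injective g ∧ ∀ t, g t ∈ S} ≃ (Fin k ↪ ↥S) :=
  { toFun := fun g => ⟨fun t => ⟨g.1 t, g.2.2 t⟩,
      fun a b h => g.2.1 (by simpa using congrArg Subtype.val h)⟩
    invFun := fun e => ⟨fun t => (e t : Fin n),
      ⟨fun a b h => e.injective (Subtype.ext h), fun t => (e t).2⟩⟩
    left_inv := fun g => rfl
    right_inv := fun e => by ext t; rfl }
  have h1 : Fintype.card {g : Fin k → Fin n // Function.Injective g ∧ ∀ t, g t ∈ S}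
      = S.card.descFactorial k := (Fintype.card_congr e).trans h2
  rw [Fintype.card_subtype] at h1
  exact h1

lemma rowsplit {k n : ℕ} (hk : 0 < k) (hn : 16 * (k + 1) * 128 ^ (k + 1) ≤ n)
    (c : Fin n → Fin n → Bool) (hT : n ^ 3 ≤ 8 * (Tcol c).card) :
    ∃ X1 X2 Y : Finset (Fin n), X1.card = k ∧ X2.card = k ∧ Y.card = k ∧
      Disjoint X1 X2 ∧ (∀ i ∈ X1, ∀ j ∈ Y, c i j = true) ∧
      (∀ i ∈ X2, ∀ j ∈ Y, c i j = false) := by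
  classical
  have hpow : 128 ≤ 128 ^ (k + 1) := by
    calc (128:ℕ) = 128 ^ 1 := (pow_one _).symm
    _ ≤ 128 ^ (k + 1) := Nat.pow_le_pow_right (by norm_num) (by omega)
  have hnbig : 2048 * (k + 1) ≤ n := le_trans (by nlinarith) hn
  have hn0 : 0 < n := by omega
  have e16 := Nat.div_add_mod n 16
  have l16 := Nat.mod_lt n (show 0 < 16 by norm_num)
  have e32 := Nat.div_add_mod n 32
  have l32 := Nat.mod_lt n (show 0 < 32 by norm_num)
  have hd32k : k + 1 ≤ n / 32 := by omega
  have huniv : (Finset.univ : Finset (Fin n × Fin n)).card = n ^ 2 := by simp [sq]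
  have haan : ∀ q : Fin n × Fin n, aa c q ≤ n := by
    intro q
    calc aa c q ≤ (Finset.univ : Finset (Fin n)).card := Finset.card_filter_le _ _
    _ = n := by simp
  set P := (Finset.univ : Finset (Fin n × Fin n)).filter (fun q => n / 16 ≤ aa c q) with hP
  have hPcard : n ^ 2 ≤ 16 * P.card := by
    have hsplit := Finset.sum_filter_add_sum_filter_not
      (Finset.univ : Finset (Fin n × Fin n)) (fun q => n / 16 ≤ aa c q) (aa c)
    have h1 : ∑ q ∈ P, aa c q ≤ P.card * n :=
      Finset.sum_le_card_nsmul _ _ _ (fun q _ => haan q)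
    have h2 : ∑ q ∈ (Finset.univ : Finset (Fin n × Fin n)).filter
        (fun q => ¬ n / 16 ≤ aa c q), aa c q ≤ n ^ 2 * (n / 16) := by
      refine le_trans (Finset.sum_le_card_nsmul _ _ (n / 16) ?_) ?_
      · intro q hq
        have := (Finset.mem_filter.mp hq).2
        omega
      · exact Nat.mul_le_mul_right _ (le_trans (Finset.card_filter_le _ _) (le_of_eq huniv))
    have hsum : n ^ 3 ≤ 8 * (P.card * n + n ^ 2 * (n / 16)) := by
      calc n ^ 3 ≤ 8 * (Tcol c).card := hT
      _ = 8 * ∑ q ∈ (Finset.univ : Finset (Fin n × Fin n)), aa c q := by rw [Tcol_card]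
      _ ≤ 8 * (P.card * n + n ^ 2 * (n / 16)) := by
            apply Nat.mul_le_mul_left
            rw [← hsplit]
            exact Nat.add_le_add h1 h2
    have h3 : 16 * (n ^ 2 * (n / 16)) ≤ n ^ 3 := by
      calc 16 * (n ^ 2 * (n / 16)) = n ^ 2 * (16 * (n / 16)) := by ring
      _ ≤ n ^ 2 * n := Nat.mul_le_mul_left _ (by omega)
      _ = n ^ 3 := by ring
    have h4 : n ^ 3 * 2 ≤ 16 * (P.card * n) + 16 * (n ^ 2 * (n / 16)) := by
      calc n ^ 3 * 2 = 2 * n ^ 3 := by ring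
      _ ≤ 2 * (8 * (P.card * n + n ^ 2 * (n / 16))) := Nat.mul_le_mul_left _ hsum
      _ = 16 * (P.card * n) + 16 * (n ^ 2 * (n / 16)) := by ring
    have h5 : n ^ 3 ≤ 16 * (P.card * n) := by omega
    have h6 : n ^ 2 * n ≤ (16 * P.card) * n := by
      calc n ^ 2 * n = n ^ 3 := by ring
      _ ≤ 16 * (P.card * n) := h5
      _ = (16 * P.card) * n := by ring
    exact Nat.le_of_mul_le_mul_right h6 hn0
  set InjT := (Finset.univ : Finset (Fin k → Fin n)).filter
    (fun g => Function.Injective g) with hInjT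
  set AR : (Fin k → Fin n) → Finset (Fin n) :=
    fun g => Finset.univ.filter (fun i => ∀ t, c i (g t) = true) with hAR
  set AB : (Fin k → Fin n) → Finset (Fin n) :=
    fun g => Finset.univ.filter (fun i => ∀ t, c i (g t) = false) with hAB
  have hdouble : ∑ q ∈ (Finset.univ : Finset (Fin n × Fin n)), (aa c q).descFactorial k
      = ∑ g ∈ InjT, (AR g).card * (AB g).card := by
    have lhs : ∀ q : Fin n × Fin n, (aa c q).descFactorial k
        = ∑ g ∈ InjT, (if ∀ t, c q.1 (g t) = true ∧ c q.2 (g t) = false then 1 else 0) := by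
      intro q
      rw [aa, ← countinj k (Finset.univ.filter fun j => c q.1 j = true ∧ c q.2 j = false),
        ← Finset.filter_filter, Finset.card_filter]
      refine Finset.sum_congr rfl fun g _ => if_congr ?_ rfl rfl
      simp only [Finset.mem_filter, Finset.mem_univ, true_and]
    have rhs : ∀ g : Fin k → Fin n, (AR g).card * (AB g).card
        = ∑ q ∈ (Finset.univ : Finset (Fin n × Fin n)),
            (if ∀ t, c q.1 (g t) = true ∧ c q.2 (g t) = false then 1 else 0) := by
      intro g
      rw [hAR, hAB, ← Finset.card_product, ← Finset.filter_product,
        Finset.univ_product_univ, Finset.card_filter]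
      refine Finset.sum_congr rfl fun q _ => if_congr ?_ rfl rfl
      exact (forall_and).symm
    calc ∑ q ∈ (Finset.univ : Finset (Fin n × Fin n)), (aa c q).descFactorial k
        = ∑ q ∈ (Finset.univ : Finset (Fin n × Fin n)), ∑ g ∈ InjT,
            (if ∀ t, c q.1 (g t) = true ∧ c q.2 (g t) = false then 1 else 0) :=
          Finset.sum_congr rfl fun q _ => lhs q
    _ = ∑ g ∈ InjT, ∑ q ∈ (Finset.univ : Finset (Fin n × Fin n)),
            (if ∀ t, c q.1 (g t) = true ∧ c q.2 (g t) = false then 1 else 0) :=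
          Finset.sum_comm
    _ = ∑ g ∈ InjT, (AR g).card * (AB g).card :=
          Finset.sum_congr rfl fun g _ => (rhs g).symm
  have hlow : ∀ q ∈ P, (n / 32) ^ k ≤ (aa c q).descFactorial k := by
    intro q hq
    have hq16 : n / 16 ≤ aa c q := (Finset.mem_filter.mp hq).2
    have hsub : n / 32 ≤ aa c q + 1 - k := by omega
    calc (n / 32) ^ k ≤ (aa c q + 1 - k) ^ k := Nat.pow_le_pow_left hsub k
    _ ≤ (aa c q).descFactorial k := Nat.pow_sub_le_descFactorial _ _
  have hQlow : P.card * (n / 32) ^ k ≤ ∑ g ∈ InjT, (AR g).card * (AB g).card := by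
    rw [← hdouble]
    calc P.card * (n / 32) ^ k = P.card • (n / 32) ^ k := by rw [smul_eq_mul]
    _ ≤ ∑ q ∈ P, (aa c q).descFactorial k := Finset.card_nsmul_le_sum P _ _ hlow
    _ ≤ ∑ q ∈ (Finset.univ : Finset (Fin n × Fin n)), (aa c q).descFactorial k :=
          Finset.sum_le_sum_of_subset (Finset.filter_subset _ _)
  have hex : ∃ g ∈ InjT, k ≤ (AR g).card ∧ k ≤ (AB g).card := by
    by_contra hcon
    push_neg at hcon
    have hterm : ∀ g ∈ InjT, (AR g).card * (AB g).card ≤ (k - 1) * n := by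
      intro g hg
      have hARn : (AR g).card ≤ n := le_trans (Finset.card_filter_le _ _) (by simp)
      have hABn : (AB g).card ≤ n := le_trans (Finset.card_filter_le _ _) (by simp)
      by_cases h : k ≤ (AR g).card
      · have hlt := hcon g hg h
        calc (AR g).card * (AB g).card ≤ n * (k - 1) := Nat.mul_le_mul hARn (by omega)
        _ = (k - 1) * n := Nat.mul_comm _ _
      · exact Nat.mul_le_mul (by omega) hABn
    have hI : InjT.card ≤ n ^ k := by
      calc InjT.card ≤ (Finset.univ : Finset (Fin k → Fin n)).card := Finset.card_filter_le _ _
      _ = n ^ k := by simp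
    have hQup : ∑ g ∈ InjT, (AR g).card * (AB g).card ≤ n ^ k * ((k - 1) * n) := by
      calc ∑ g ∈ InjT, (AR g).card * (AB g).card ≤ InjT.card • ((k - 1) * n) :=
            Finset.sum_le_card_nsmul _ _ _ hterm
      _ = InjT.card * ((k - 1) * n) := by rw [smul_eq_mul]
      _ ≤ n ^ k * ((k - 1) * n) := Nat.mul_le_mul_right _ hI
    have hB : P.card * (n / 32) ^ k ≤ n ^ k * ((k - 1) * n) := le_trans hQlow hQup
    have hmulpow : n ^ k ≤ (64 * (n / 32)) ^ k := Nat.pow_le_pow_left (by omega) k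
    have hfinal : n * n ^ (k + 1) ≤ (16 * (k - 1) * 64 ^ k) * n ^ (k + 1) := by
      calc n * n ^ (k + 1) = n ^ 2 * n ^ k := by ring
      _ ≤ n ^ 2 * (64 * (n / 32)) ^ k := Nat.mul_le_mul_left _ hmulpow
      _ = 64 ^ k * (n ^ 2 * (n / 32) ^ k) := by rw [mul_pow]; ring
      _ ≤ 64 ^ k * ((16 * P.card) * (n / 32) ^ k) :=
            Nat.mul_le_mul_left _ (Nat.mul_le_mul_right _ hPcard)
      _ = 64 ^ k * (16 * (P.card * (n / 32) ^ k)) := by ring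
      _ ≤ 64 ^ k * (16 * (n ^ k * ((k - 1) * n))) :=
            Nat.mul_le_mul_left _ (Nat.mul_le_mul_left _ hB)
      _ = (16 * (k - 1) * 64 ^ k) * n ^ (k + 1) := by ring
    have hn' : n ≤ 16 * (k - 1) * 64 ^ k := Nat.le_of_mul_le_mul_right
      (by calc n * n ^ (k+1) ≤ _ := hfinal
          _ = _ := rfl) (by positivity)
    have h64 : (64:ℕ) ^ k ≤ 128 ^ (k + 1) :=
      le_trans (Nat.pow_le_pow_left (by norm_num) k) (Nat.pow_le_pow_right (by norm_num) (by omega))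
    have hlt : 16 * (k - 1) * 64 ^ k < 16 * (k + 1) * 128 ^ (k + 1) := by
      calc 16 * (k - 1) * 64 ^ k ≤ 16 * (k - 1) * 128 ^ (k + 1) := Nat.mul_le_mul_left _ h64
      _ < 16 * (k + 1) * 128 ^ (k + 1) :=
          mul_lt_mul_of_pos_right (by omega) (by positivity)
    omega
  obtain ⟨g, hg, hARk, hABk⟩ := hex
  obtain ⟨X1, hX1sub, hX1card⟩ := Finset.exists_subset_card_eq hARk
  obtain ⟨X2, hX2sub, hX2card⟩ := Finset.exists_subset_card_eq hABk
  have hginj : Function.Injective g := (Finset.mem_filter.mp hg).2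
  refine ⟨X1, X2, Finset.univ.image g, hX1card, hX2card, ?_, ?_, ?_, ?_⟩
  · rw [Finset.card_image_of_injective _ hginj, Finset.card_univ, Fintype.card_fin]
  · rw [Finset.disjoint_left]
    intro i hi1 hi2
    have h1 := (Finset.mem_filter.mp (hX1sub hi1)).2 ⟨0, hk⟩
    have h2 := (Finset.mem_filter.mp (hX2sub hi2)).2 ⟨0, hk⟩
    rw [h1] at h2
    exact Bool.noConfusion h2
  · intro i hi j hj
    obtain ⟨t, _, rfl⟩ := Finset.mem_image.mp hj
    exact (Finset.mem_filter.mp (hX1sub hi)).2 t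
  · intro i hi j hj
    obtain ⟨t, _, rfl⟩ := Finset.mem_image.mp hj
    exact (Finset.mem_filter.mp (hX2sub hi)).2 t

lemma structure_lemma {k n : ℕ} (hk : 0 < k) (hn : 16 * (k + 1) * 128 ^ (k + 1) ≤ n)
    (c : Fin n → Fin n → Bool)
    (hr : n ^ 2 ≤ 2 * redTotal c) (hb : n ^ 2 ≤ 2 * blueTotal c) :
    (∃ X1 X2 Y : Finset (Fin n), X1.card = k ∧ X2.card = k ∧ Y.card = k ∧
      Disjoint X1 X2 ∧ (∀ i ∈ X1, ∀ j ∈ Y, c i j = true) ∧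
      (∀ i ∈ X2, ∀ j ∈ Y, c i j = false)) ∨
    (∃ X1 X2 Y : Finset (Fin n), X1.card = k ∧ X2.card = k ∧ Y.card = k ∧
      Disjoint X1 X2 ∧ (∀ i ∈ X1, ∀ j ∈ Y, c j i = true) ∧
      (∀ i ∈ X2, ∀ j ∈ Y, c j i = false)) := by
  have hpow : 128 ≤ 128 ^ (k + 1) := by
    calc (128:ℕ) = 128 ^ 1 := (pow_one _).symm
    _ ≤ 128 ^ (k + 1) := Nat.pow_le_pow_right (by norm_num) (by omega)
  have hnbig : 2048 * (k + 1) ≤ n := le_trans (by nlinarith) hn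
  have hn0 : 0 < n := by omega
  have h4 : n ^ 4 ≤ 4 * (n * ((Trow c).card + (Tcol c).card)) := by
    calc n ^ 4 = n ^ 2 * n ^ 2 := by ring
    _ ≤ (2 * redTotal c) * (2 * blueTotal c) := Nat.mul_le_mul hr hb
    _ = 4 * (redTotal c * blueTotal c) := by ring
    _ ≤ 4 * (n * ((Trow c).card + (Tcol c).card)) := Nat.mul_le_mul_left _ (key_count c)
  have h3 : n ^ 3 ≤ 4 * ((Trow c).card + (Tcol c).card) := by
    have : n ^ 3 * n ≤ (4 * ((Trow c).card + (Tcol c).card)) * n := by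
      calc n ^ 3 * n = n ^ 4 := by ring
      _ ≤ 4 * (n * ((Trow c).card + (Tcol c).card)) := h4
      _ = (4 * ((Trow c).card + (Tcol c).card)) * n := by ring
    exact Nat.le_of_mul_le_mul_right this hn0
  by_cases hcase : n ^ 3 ≤ 8 * (Tcol c).card
  · exact Or.inl (rowsplit hk hn c hcase)
  · right
    have hTr : n ^ 3 ≤ 8 * (Tcol (transp c)).card := by
      rw [← Trow_eq_Tcol_transp]
      omega
    obtain ⟨X1, X2, Y, h1, h2, h3, hd, hred, hblue⟩ := rowsplit hk hn (transp c) hTr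
    exact ⟨X1, X2, Y, h1, h2, h3, hd, hred, hblue⟩

section build

variable {n : ℕ} {α β : Type*} [Fintype α] [Fintype β] [DecidableEq α] [DecidableEq β]

lemma build_alpha (c : Fin n → Fin n → Bool) (E : Finset (α × β)) (U : Finset α)
    (X1 X2 Y : Finset (Fin n)) (hd : Disjoint X1 X2)
    (hc1 : Fintype.card α ≤ X1.card) (hc2 : Fintype.card α ≤ X2.card)
    (hc3 : Fintype.card β ≤ Y.card)
    (h1 : ∀ i ∈ X1, ∀ j ∈ Y, c i j = true) (h2 : ∀ i ∈ X2, ∀ j ∈ Y, c i j = false) :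
    ∃ f : α ⊕ β → Fin n ⊕ Fin n, IsCopy E f ∧
      edgeRedCount c E f = (E.filter fun p => p.1 ∈ U).card ∧
      edgeBlueCount c E f = (E.filter fun p => p.1 ∉ U).card := by
  classical
  obtain ⟨e1, he1⟩ := Function.Embedding.exists_of_card_le_finset hc1
  obtain ⟨e2, he2⟩ := Function.Embedding.exists_of_card_le_finset hc2
  obtain ⟨e3, he3⟩ := Function.Embedding.exists_of_card_le_finset hc3
  set ρ : α → Fin n := fun a => if a ∈ U then e1 a else e2 a with hρ
  have hρ1 : ∀ a ∈ U, ρ a ∈ X1 := fun a ha => by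
    rw [hρ]; simp only [ha, if_true]
    exact he1 (Set.mem_range_self a)
  have hρ2 : ∀ a, a ∉ U → ρ a ∈ X2 := fun a ha => by
    rw [hρ]; simp only [ha, if_false]
    exact he2 (Set.mem_range_self a)
  have hρinj : Function.Injective ρ := by
    intro a a' h
    by_cases ha : a ∈ U <;> by_cases ha' : a' ∈ U
    · simp only [hρ, ha, ha', if_true] at h; exact e1.injective h
    · exfalso
      have m1 : ρ a ∈ X1 := hρ1 a ha
      have m2 : ρ a' ∈ X2 := hρ2 a' ha'
      rw [h] at m1
      exact (Finset.disjoint_left.mp hd m1) m2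
    · exfalso
      have m1 : ρ a' ∈ X1 := hρ1 a' ha'
      have m2 : ρ a ∈ X2 := hρ2 a ha
      rw [← h] at m1
      exact (Finset.disjoint_left.mp hd m1) m2
    · simp only [hρ, ha, ha', if_false] at h; exact e2.injective h
  refine ⟨Sum.elim (fun a => Sum.inl (ρ a)) (fun b => Sum.inr (e3 b)), ⟨?_, ?_⟩, ?_, ?_⟩
  · intro x y h
    cases x <;> cases y <;> simp only [Sum.elim_inl, Sum.elim_inr] at h
    · rw [Sum.inl.injEq] at h ⊢; exact hρinj h
    · cases h
    · cases h
    · rw [Sum.inr.injEq] at h ⊢; exact e3.injective h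
  · intro p _; rfl
  · rw [edgeRedCount]
    congr 1
    apply Finset.filter_congr
    intro p _
    simp only [Sum.elim_inl, Sum.elim_inr]
    show (redB c (Sum.inl (ρ p.1)) (Sum.inr (e3 p.2)) = true) ↔ p.1 ∈ U
    have hY : e3 p.2 ∈ Y := he3 (Set.mem_range_self p.2)
    by_cases hp : p.1 ∈ U
    · simp only [hp, iff_true]
      exact h1 _ (hρ1 _ hp) _ hY
    · simp only [hp, iff_false]
      rw [show redB c (Sum.inl (ρ p.1)) (Sum.inr (e3 p.2)) = c (ρ p.1) (e3 p.2) from rfl,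
        h2 _ (hρ2 _ hp) _ hY]
      simp
  · rw [edgeBlueCount]
    congr 1
    apply Finset.filter_congr
    intro p _
    simp only [Sum.elim_inl, Sum.elim_inr]
    show (blueB c (Sum.inl (ρ p.1)) (Sum.inr (e3 p.2)) = true) ↔ p.1 ∉ U
    have hY : e3 p.2 ∈ Y := he3 (Set.mem_range_self p.2)
    rw [show blueB c (Sum.inl (ρ p.1)) (Sum.inr (e3 p.2)) = !c (ρ p.1) (e3 p.2) from rfl]
    by_cases hp : p.1 ∈ U
    · simp only [hp, not_true, iff_false, h1 _ (hρ1 _ hp) _ hY]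
      simp
    · simp only [hp, not_false_iff, iff_true, h2 _ (hρ2 _ hp) _ hY]
      rfl

lemma build_beta (c : Fin n → Fin n → Bool) (E : Finset (α × β)) (U : Finset β)
    (X1 X2 Y : Finset (Fin n)) (hd : Disjoint X1 X2)
    (hc1 : Fintype.card β ≤ X1.card) (hc2 : Fintype.card β ≤ X2.card)
    (hc3 : Fintype.card α ≤ Y.card)
    (h1 : ∀ i ∈ X1, ∀ j ∈ Y, c i j = true) (h2 : ∀ i ∈ X2, ∀ j ∈ Y, c i j = false) :
    ∃ f : α ⊕ β → Fin n ⊕ Fin n, IsCopy E f ∧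
      edgeRedCount c E f = (E.filter fun p => p.2 ∈ U).card ∧
      edgeBlueCount c E f = (E.filter fun p => p.2 ∉ U).card := by
  classical
  obtain ⟨e1, he1⟩ := Function.Embedding.exists_of_card_le_finset hc1
  obtain ⟨e2, he2⟩ := Function.Embedding.exists_of_card_le_finset hc2
  obtain ⟨e3, he3⟩ := Function.Embedding.exists_of_card_le_finset hc3
  set ρ : β → Fin n := fun b => if b ∈ U then e1 b else e2 b with hρ
  have hρ1 : ∀ b ∈ U, ρ b ∈ X1 := fun b hb => by
    rw [hρ]; simp only [hb, if_true]
    exact he1 (Set.mem_range_self b)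
  have hρ2 : ∀ b, b ∉ U → ρ b ∈ X2 := fun b hb => by
    rw [hρ]; simp only [hb, if_false]
    exact he2 (Set.mem_range_self b)
  have hρinj : Function.Injective ρ := by
    intro b b' h
    by_cases hb : b ∈ U <;> by_cases hb' : b' ∈ U
    · simp only [hρ, hb, hb', if_true] at h; exact e1.injective h
    · exfalso
      have m1 : ρ b ∈ X1 := hρ1 b hb
      have m2 : ρ b' ∈ X2 := hρ2 b' hb'
      rw [h] at m1
      exact (Finset.disjoint_left.mp hd m1) m2
    · exfalso
      have m1 : ρ b' ∈ X1 := hρ1 b' hb'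
      have m2 : ρ b ∈ X2 := hρ2 b hb
      rw [← h] at m1
      exact (Finset.disjoint_left.mp hd m1) m2
    · simp only [hρ, hb, hb', if_false] at h; exact e2.injective h
  refine ⟨Sum.elim (fun a => Sum.inr (e3 a)) (fun b => Sum.inl (ρ b)), ⟨?_, ?_⟩, ?_, ?_⟩
  · intro x y h
    cases x <;> cases y <;> simp only [Sum.elim_inl, Sum.elim_inr] at h
    · exact congrArg Sum.inl (e3.injective (by simpa using h))
    · cases h
    · cases h
    · exact congrArg Sum.inr (hρinj (by simpa using h))
  · intro p _; rfl
  · rw [edgeRedCount]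
    congr 1
    apply Finset.filter_congr
    intro p _
    simp only [Sum.elim_inl, Sum.elim_inr]
    show (redB c (Sum.inr (e3 p.1)) (Sum.inl (ρ p.2)) = true) ↔ p.2 ∈ U
    have hY : e3 p.1 ∈ Y := he3 (Set.mem_range_self p.1)
    rw [show redB c (Sum.inr (e3 p.1)) (Sum.inl (ρ p.2)) = c (ρ p.2) (e3 p.1) from rfl]
    by_cases hp : p.2 ∈ U
    · simp only [hp, iff_true]
      exact h1 _ (hρ1 _ hp) _ hY
    · simp only [hp, iff_false, h2 _ (hρ2 _ hp) _ hY]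
      simp
  · rw [edgeBlueCount]
    congr 1
    apply Finset.filter_congr
    intro p _
    simp only [Sum.elim_inl, Sum.elim_inr]
    show (blueB c (Sum.inr (e3 p.1)) (Sum.inl (ρ p.2)) = true) ↔ p.2 ∉ U
    have hY : e3 p.1 ∈ Y := he3 (Set.mem_range_self p.1)
    rw [show blueB c (Sum.inr (e3 p.1)) (Sum.inl (ρ p.2)) = !c (ρ p.2) (e3 p.1) from rfl]
    by_cases hp : p.2 ∈ U
    · simp only [hp, not_true, iff_false, h1 _ (hρ1 _ hp) _ hY]
      simp
    · simp only [hp, not_false_iff, iff_true, h2 _ (hρ2 _ hp) _ hY]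
      rfl

lemma crossB_swap (u v : Fin n ⊕ Fin n) : crossB (Sum.swap u) (Sum.swap v) = crossB u v := by
  cases u <;> cases v <;> rfl

lemma redB_swap (c : Fin n → Fin n → Bool) (u v : Fin n ⊕ Fin n) :
    redB c (Sum.swap u) (Sum.swap v) = redB (transp c) u v := by
  cases u <;> cases v <;> rfl

lemma blueB_swap (c : Fin n → Fin n → Bool) (u v : Fin n ⊕ Fin n) :
    blueB c (Sum.swap u) (Sum.swap v) = blueB (transp c) u v := by
  cases u <;> cases v <;> rfl

lemma swap_transfer (c : Fin n → Fin n → Bool) (E : Finset (α × β))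
    (f : α ⊕ β → Fin n ⊕ Fin n) (h : IsCopy E f) :
    IsCopy E (Sum.swap ∘ f) ∧
      edgeRedCount c E (Sum.swap ∘ f) = edgeRedCount (transp c) E f ∧
      edgeBlueCount c E (Sum.swap ∘ f) = edgeBlueCount (transp c) E f := by
  refine ⟨⟨(Sum.swap_leftInverse.injective.comp h.1), ?_⟩, ?_, ?_⟩
  · intro p hp
    rw [Function.comp_apply, Function.comp_apply, crossB_swap]
    exact h.2 p hp
  · rw [edgeRedCount, edgeRedCount]
    congr 1
    apply Finset.filter_congr
    intro p _
    rw [Function.comp_apply, Function.comp_apply, redB_swap]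
  · rw [edgeBlueCount, edgeBlueCount]
    congr 1
    apply Finset.filter_congr
    intro p _
    rw [Function.comp_apply, Function.comp_apply, blueB_swap]

end build

/-- Sufficiency for bipartite omnitonality.  Let `G` be a bipartite graph with fixed
bipartition `X_G ⊔ Y_G` (parts `α` and `β`, edge set `E`) and `m` edges.  Suppose that for
every `0 ≤ r ≤ m` there is a set `U_r` contained in one of the two parts of `G` such that
exactly `r` edges of `G` are incident to a vertex of `U_r`.  Then there is `N` such that
for every `n ≥ N` there is an integer `z < n²/2` such that every 2-edge coloring of
`K_{n,n}` with more than `z` edges in each color class contains, for every `0 ≤ r ≤ m`,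
a copy of `G` with exactly `r` red edges and `m - r` blue edges. -/
theorem bipartite_omnitonal_sufficiency {α β : Type*} [Fintype α] [Fintype β]
    [DecidableEq α] [DecidableEq β] (E : Finset (α × β)) (m : ℕ) (hm : E.card = m)
    (hU : ∀ r : ℕ, r ≤ m →
      (∃ U : Finset α, (E.filter fun p => p.1 ∈ U).card = r) ∨
      (∃ U : Finset β, (E.filter fun p => p.2 ∈ U).card = r)) :
    ∃ N : ℕ, 0 < N ∧ ∀ n : ℕ, N ≤ n → ∃ z : ℕ, 2 * z < n ^ 2 ∧
      ∀ c : Fin n → Fin n → Bool, z < redTotal c → z < blueTotal c →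
        ∀ r : ℕ, r ≤ m →
          ∃ f : α ⊕ β → Fin n ⊕ Fin n, IsCopy E f ∧
            edgeRedCount c E f = r ∧ edgeBlueCount c E f = m - r := by
  classical
  set k := max (Fintype.card α) (Fintype.card β) + 1 with hkdef
  have hk : 0 < k := Nat.succ_pos _
  have hkα : Fintype.card α ≤ k := le_trans (le_max_left _ _) (Nat.le_succ _)
  have hkβ : Fintype.card β ≤ k := le_trans (le_max_right _ _) (Nat.le_succ _)
  refine ⟨16 * (k + 1) * 128 ^ (k + 1), by positivity, fun n hn => ?_⟩
  have hn0 : 0 < n := lt_of_lt_of_le (by positivity) hn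
  obtain ⟨M, hM⟩ : ∃ M, M = n ^ 2 := ⟨_, rfl⟩
  have hM1 : 1 ≤ M := hM ▸ pow_pos hn0 2
  refine ⟨(n ^ 2 - 1) / 2, by rw [← hM]; omega, ?_⟩
  intro c hred hblue r hr
  have hRB : redTotal c + blueTotal c = n ^ 2 := by
    have hcongr : (Finset.univ.filter fun p : Fin n × Fin n => c p.1 p.2 = false)
        = Finset.univ.filter fun p : Fin n × Fin n => ¬ (c p.1 p.2 = true) := by
      apply Finset.filter_congr; intro p _; simp
    rw [redTotal, blueTotal, hcongr, Finset.card_filter_add_card_filter_not]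
    simp [sq]
  rw [← hM] at hred hblue
  have hr2 : n ^ 2 ≤ 2 * redTotal c := by rw [← hM]; omega
  have hb2 : n ^ 2 ≤ 2 * blueTotal c := by rw [← hM]; omega
  have hcount : ∀ U : Finset α, (E.filter fun p => p.1 ∈ U).card = r →
      (E.filter fun p => p.1 ∉ U).card = m - r := by
    intro U hUc
    have h := Finset.card_filter_add_card_filter_not
      (s := E) (p := fun p => p.1 ∈ U)
    rw [hUc, hm] at h
    omega
  have hcountβ : ∀ U : Finset β, (E.filter fun p => p.2 ∈ U).card = r →
      (E.filter fun p => p.2 ∉ U).card = m - r := by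
    intro U hUc
    have h := Finset.card_filter_add_card_filter_not
      (s := E) (p := fun p => p.2 ∈ U)
    rw [hUc, hm] at h
    omega
  rcases structure_lemma hk hn c hr2 hb2 with
    ⟨X1, X2, Y, c1, c2, c3, hd, hA, hB⟩ | ⟨X1, X2, Y, c1, c2, c3, hd, hA, hB⟩
  · rcases hU r hr with ⟨U, hUc⟩ | ⟨U, hUc⟩
    · obtain ⟨f, hcopy, hredc, hbluec⟩ := build_alpha c E U X1 X2 Y hd
        (c1 ▸ hkα) (c2 ▸ hkα) (c3 ▸ hkβ) hA hB
      exact ⟨f, hcopy, by rw [hredc, hUc], by rw [hbluec, hcount U hUc]⟩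
    · obtain ⟨f, hcopy, hredc, hbluec⟩ := build_beta c E U X1 X2 Y hd
        (c1 ▸ hkβ) (c2 ▸ hkβ) (c3 ▸ hkα) hA hB
      exact ⟨f, hcopy, by rw [hredc, hUc], by rw [hbluec, hcountβ U hUc]⟩
  · rcases hU r hr with ⟨U, hUc⟩ | ⟨U, hUc⟩
    · obtain ⟨f, hcopy, hredc, hbluec⟩ := build_alpha (transp c) E U X1 X2 Y hd
        (c1 ▸ hkα) (c2 ▸ hkα) (c3 ▸ hkβ) hA hB
      obtain ⟨hcopy', hred', hblue'⟩ := swap_transfer c E f hcopy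
      exact ⟨Sum.swap ∘ f, hcopy', by rw [hred', hredc, hUc],
        by rw [hblue', hbluec, hcount U hUc]⟩
    · obtain ⟨f, hcopy, hredc, hbluec⟩ := build_beta (transp c) E U X1 X2 Y hd
        (c1 ▸ hkβ) (c2 ▸ hkβ) (c3 ▸ hkα) hA hB
      obtain ⟨hcopy', hred', hblue'⟩ := swap_transfer c E f hcopy
      exact ⟨Sum.swap ∘ f, hcopy', by rw [hred', hredc, hUc],
        by rw [hblue', hbluec, hcountβ U hUc]⟩
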